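/- Let Ĝ(t) = c / (t · (log(e²/t))²) for t ∈ (0,1], where c > 0 is a constant. Then Ĝ is strictly decreasing on (0,1), and for every λ ≥ 1, ∫₀¹ e^{-λv} Ĝ(v) dv ≤ 2c / (2 + log λ). -/

import Mathlib

open Real

noncomputable def Tf (c lam : ℝ) : ℝ → ℝ := fun v =>
  if v ≤ 0 then 0 else Real.exp (-lam * v) * (c / (2 - Real.log v))

noncomputable def Sf (c lam L : ℝ) : ℝ → ℝ := fun v =>
  Tf c lam v - c / (2 * L) * (Real.exp (-lam * v) * (3 + lam * v))

noncomputable def mf (c lam L : ℝ) : ℝ → ℝ := fun v =>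
  Real.exp (-lam * v) * (c / (v * (2 - Real.log v) ^ 2))
    + lam * Real.exp (-lam * v) * (c / L * (1 + lam * v / 2) - c / (2 - Real.log v))

lemma Tf_cont (c lam : ℝ) : ContinuousOn (Tf c lam) (Set.Icc (0:ℝ) 1) := by
  intro v hv
  rcases eq_or_lt_of_le hv.1 with h0 | h0
  · subst h0
    rw [← continuousWithinAt_diff_self]
    have hsub : Set.Icc (0:ℝ) 1 \ {0} ⊆ Set.Ioi 0 := fun x hx =>
      lt_of_le_of_ne hx.1.1 (Ne.symm hx.2)
    have hT0 : Tf c lam 0 = 0 := by simp [Tf]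
    unfold ContinuousWithinAt
    rw [hT0]
    apply Filter.Tendsto.mono_left _ (nhdsWithin_mono _ hsub)
    have t1 : Filter.Tendsto (fun x : ℝ => 2 - Real.log x) (nhdsWithin 0 (Set.Ioi 0))
        Filter.atTop := by
      have h1 := Filter.tendsto_neg_atBot_atTop.comp Real.tendsto_log_nhdsGT_zero
      have h2 := Filter.tendsto_atTop_add_const_left (nhdsWithin (0:ℝ) (Set.Ioi 0)) 2 h1
      simpa [Function.comp, sub_eq_add_neg] using h2
    have t2 : Filter.Tendsto (fun x : ℝ => c / (2 - Real.log x))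
        (nhdsWithin 0 (Set.Ioi 0)) (nhds 0) :=
      Filter.Tendsto.div_atTop tendsto_const_nhds t1
    have t3 : Filter.Tendsto (fun x : ℝ => Real.exp (-lam * x))
        (nhdsWithin 0 (Set.Ioi 0)) (nhds 1) := by
      have hcont : Continuous (fun x : ℝ => Real.exp (-lam * x)) := by continuity
      have h4 := (hcont.tendsto 0).mono_left (nhdsWithin_le_nhds (s := Set.Ioi (0:ℝ)))
      simpa using h4
    have t4 := t3.mul t2
    rw [one_mul] at t4
    apply t4.congr'
    filter_upwards [self_mem_nhdsWithin] with x hx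
    simp [Tf, not_le.2 (Set.mem_Ioi.1 hx)]
  · have hlv : Real.log v ≤ 0 := Real.log_nonpos h0.le hv.2
    have hXne : (2 - Real.log v) ≠ 0 := ne_of_gt (by linarith)
    apply ContinuousAt.continuousWithinAt
    have hca : ContinuousAt (fun x : ℝ => Real.exp (-lam * x) * (c / (2 - Real.log x))) v := by
      apply ContinuousAt.mul
      · exact (Real.continuous_exp.comp (continuous_const.mul continuous_id)).continuousAt
      · exact continuousAt_const.div
          (continuousAt_const.sub (Real.continuousAt_log h0.ne')) hXne
    apply hca.congr
    filter_upwards [Ioi_mem_nhds h0] with x hx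
    simp [Tf, not_le.2 (Set.mem_Ioi.1 hx)]

lemma Sf_cont (c lam L : ℝ) : ContinuousOn (Sf c lam L) (Set.Icc (0:ℝ) 1) := by
  apply (Tf_cont c lam).sub
  apply Continuous.continuousOn
  continuity

lemma Sf_deriv (c lam L : ℝ) (hL : L ≠ 0) {v : ℝ} (hv : v ∈ Set.Ioo (0:ℝ) 1) :
    HasDerivAt (Sf c lam L) (mf c lam L v) v := by
  have hv0 : v ≠ 0 := hv.1.ne'
  have hlv : Real.log v < 0 := Real.log_neg hv.1 hv.2
  have hXne : (2 - Real.log v) ≠ 0 := ne_of_gt (by linarith)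
  have hexp : HasDerivAt (fun x : ℝ => Real.exp (-lam * x)) (Real.exp (-lam * v) * -lam) v := by
    simpa using ((hasDerivAt_id v).const_mul (-lam)).exp
  have hinv : HasDerivAt (fun x : ℝ => c / (2 - Real.log x))
      (c * (-(-v⁻¹) / (2 - Real.log v) ^ 2)) v := by
    simp only [div_eq_mul_inv]
    exact (((Real.hasDerivAt_log hv0).const_sub 2).inv hXne).const_mul c
  have hT' : HasDerivAt (Tf c lam)
      (Real.exp (-lam * v) * -lam * (c / (2 - Real.log v))
        + Real.exp (-lam * v) * (c * (-(-v⁻¹) / (2 - Real.log v) ^ 2))) v := by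
    apply HasDerivAt.congr_of_eventuallyEq (hexp.mul hinv)
    filter_upwards [Ioi_mem_nhds hv.1] with x hx
    simp [Tf, not_le.2 (Set.mem_Ioi.1 hx)]
  have hrest : HasDerivAt (fun x : ℝ => c / (2 * L) * (Real.exp (-lam * x) * (3 + lam * x)))
      (c / (2 * L) * (Real.exp (-lam * v) * -lam * (3 + lam * v)
        + Real.exp (-lam * v) * lam)) v := by
    have := (hexp.mul (((hasDerivAt_id v).const_mul lam).const_add 3)).const_mul (c / (2 * L))
    simpa using this
  have hsum := hT'.sub hrest
  refine (hsum : HasDerivAt (Sf c lam L) _ v).congr_deriv ?_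
  simp only [mf]
  field_simp
  ring

theorem stmt_7 (c : ℝ) (hc : 0 < c)
    (G : ℝ → ℝ) (hG : ∀ t ∈ Set.Ioc (0:ℝ) 1, G t = c / (t * (Real.log (Real.exp 2 / t)) ^ 2)) :
    StrictAntiOn G (Set.Ioo (0:ℝ) 1) ∧
    ∀ lam : ℝ, 1 ≤ lam →
      ∫ v in (0:ℝ)..1, Real.exp (-lam * v) * G v ≤ 2 * c / (2 + Real.log lam) := by
  have hGrw : ∀ t : ℝ, t ∈ Set.Ioc (0:ℝ) 1 → G t = c / (t * (2 - Real.log t) ^ 2) := by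
    intro t ht
    rw [hG t ht, Real.log_div (Real.exp_ne_zero 2) ht.1.ne', Real.log_exp]
  have hφderiv : ∀ x : ℝ, x ≠ 0 →
      HasDerivAt (fun t : ℝ => t * (2 - Real.log t) ^ 2)
        (1 * (2 - Real.log x) ^ 2 + x * (2 * (2 - Real.log x) ^ 1 * -x⁻¹)) x := by
    intro x hx
    exact (hasDerivAt_id x).mul (((Real.hasDerivAt_log hx).const_sub 2).pow 2)
  have hφmono : StrictMonoOn (fun t : ℝ => t * (2 - Real.log t) ^ 2) (Set.Ioo (0:ℝ) 1) := by
    apply strictMonoOn_of_deriv_pos (convex_Ioo 0 1)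
    · intro x hx
      exact ((hφderiv x hx.1.ne').continuousAt).continuousWithinAt
    · intro x hx
      rw [interior_Ioo] at hx
      rw [(hφderiv x hx.1.ne').deriv]
      have hlx : Real.log x < 0 := Real.log_neg hx.1 hx.2
      have hxne : x ≠ 0 := hx.1.ne'
      have h1 : (1:ℝ) * (2 - Real.log x) ^ 2 + x * (2 * (2 - Real.log x) ^ 1 * -x⁻¹)
          = (2 - Real.log x) * (-Real.log x) := by
        field_simp
        ring
      rw [h1]
      have h2 : 0 < 2 - Real.log x := by linarith
      nlinarith
  have hφpos : ∀ x : ℝ, x ∈ Set.Ioc (0:ℝ) 1 → 0 < x * (2 - Real.log x) ^ 2 := by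
    intro x hx
    have hlx : Real.log x ≤ 0 := Real.log_nonpos hx.1.le hx.2
    have h2 : (0:ℝ) < 2 - Real.log x := by linarith
    exact mul_pos hx.1 (pow_pos h2 2)
  constructor
  · intro s hs t ht hst
    rw [hGrw s ⟨hs.1, hs.2.le⟩, hGrw t ⟨ht.1, ht.2.le⟩]
    exact div_lt_div_of_pos_left hc (hφpos s ⟨hs.1, hs.2.le⟩) (hφmono hs ht hst)
  · intro lam hlam
    have hlampos : (0:ℝ) < lam := by linarith
    have hloglam : 0 ≤ Real.log lam := Real.log_nonneg hlam
    set L : ℝ := 2 + Real.log lam with hLdef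
    have hL2 : (2:ℝ) ≤ L := by simp only [hLdef]; linarith
    have hLpos : (0:ℝ) < L := by linarith
    -- key pointwise inequality
    have key : ∀ v : ℝ, v ∈ Set.Ioc (0:ℝ) 1 →
        c / (2 - Real.log v) ≤ c / L * (1 + lam * v / 2) := by
      intro v hv
      have hlv : Real.log v ≤ 0 := Real.log_nonpos hv.1.le hv.2
      have hXpos : (0:ℝ) < 2 - Real.log v := by linarith
      have hlv2 : Real.log (lam * v) ≤ lam * v := by
        have := Real.log_le_sub_one_of_pos (mul_pos hlampos hv.1)
        linarith
      have hlog_add : Real.log (lam * v) = Real.log lam + Real.log v :=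
        Real.log_mul hlampos.ne' hv.1.ne'
      have hLX : L ≤ (2 - Real.log v) * (1 + lam * v / 2) := by
        have hlv0 : 0 ≤ lam * v := (mul_pos hlampos hv.1).le
        have h3 : Real.log lam + Real.log v ≤ lam * v := by rw [← hlog_add]; exact hlv2
        simp only [hLdef]
        nlinarith
      rw [div_mul_eq_mul_div, div_le_div_iff₀ hXpos hLpos]
      nlinarith [mul_le_mul_of_nonneg_left hLX hc.le]
    -- nonnegativity of the majorant mf on (0,1]
    have hmnonneg : ∀ v : ℝ, v ∈ Set.Ioc (0:ℝ) 1 → 0 ≤ mf c lam L v := by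
      intro v hv
      have h1 : 0 ≤ Real.exp (-lam * v) * (c / (v * (2 - Real.log v) ^ 2)) :=
        mul_nonneg (Real.exp_nonneg _)
          (div_nonneg hc.le (mul_nonneg hv.1.le (sq_nonneg _)))
      have h2 : 0 ≤ lam * Real.exp (-lam * v)
          * (c / L * (1 + lam * v / 2) - c / (2 - Real.log v)) := by
        apply mul_nonneg (mul_nonneg hlampos.le (Real.exp_nonneg _))
        linarith [key v hv]
      simp only [mf]
      linarith
    -- integrability of mf
    have hSderiv : ∀ x ∈ Set.Ioo (0:ℝ) 1, HasDerivAt (Sf c lam L) (mf c lam L x) x :=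
      fun x hx => Sf_deriv c lam L hLpos.ne' hx
    have hmint : IntervalIntegrable (mf c lam L) MeasureTheory.volume 0 1 := by
      apply intervalIntegral.intervalIntegrable_deriv_of_nonneg
      · simpa [Set.uIcc_of_le (zero_le_one' ℝ)] using Sf_cont c lam L
      · simpa using hSderiv
      · intro x hx
        simp only [min_eq_left (zero_le_one' ℝ), max_eq_right (zero_le_one' ℝ)] at hx
        exact hmnonneg x ⟨hx.1, hx.2.le⟩
    have hftc : ∫ v in (0:ℝ)..1, mf c lam L v = Sf c lam L 1 - Sf c lam L 0 :=
      intervalIntegral.integral_eq_sub_of_hasDerivAt_of_le zero_le_one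
        (Sf_cont c lam L) hSderiv hmint
    -- rewrite the original integrand
    set g : ℝ → ℝ := fun v => Real.exp (-lam * v) * (c / (v * (2 - Real.log v) ^ 2)) with hgdef
    have hcongr : ∫ v in (0:ℝ)..1, Real.exp (-lam * v) * G v = ∫ v in (0:ℝ)..1, g v := by
      apply intervalIntegral.integral_congr_ae
      apply Filter.Eventually.of_forall
      intro x hx
      rw [Set.uIoc_of_le (zero_le_one' ℝ)] at hx
      simp only [hgdef]
      rw [hGrw x hx]
    have hglem : ∀ x : ℝ, x ∈ Set.Ioc (0:ℝ) 1 → g x ≤ mf c lam L x := by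
      intro x hx
      have h2 : 0 ≤ lam * Real.exp (-lam * x)
          * (c / L * (1 + lam * x / 2) - c / (2 - Real.log x)) := by
        apply mul_nonneg (mul_nonneg hlampos.le (Real.exp_nonneg _))
        linarith [key x hx]
      simp only [mf, hgdef]
      linarith
    have hgnonneg : ∀ x : ℝ, x ∈ Set.Ioc (0:ℝ) 1 → 0 ≤ g x := fun x hx =>
      mul_nonneg (Real.exp_nonneg _) (div_nonneg hc.le (mul_nonneg hx.1.le (sq_nonneg _)))
    have hgmeas : MeasureTheory.AEStronglyMeasurable g
        (MeasureTheory.volume.restrict (Set.uIoc (0:ℝ) 1)) := by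
      rw [Set.uIoc_of_le (zero_le_one' ℝ)]
      apply ContinuousOn.aestronglyMeasurable _ measurableSet_Ioc
      intro x hx
      apply ContinuousAt.continuousWithinAt
      have hlv : Real.log x ≤ 0 := Real.log_nonpos hx.1.le hx.2
      have h2 : (0:ℝ) < 2 - Real.log x := by linarith
      have hden : x * (2 - Real.log x) ^ 2 ≠ 0 := (mul_pos hx.1 (pow_pos h2 2)).ne'
      apply ContinuousAt.mul
      · exact (Real.continuous_exp.comp (continuous_const.mul continuous_id)).continuousAt
      · exact continuousAt_const.div
          ((continuousAt_id.mul (((continuousAt_const.sub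
            (Real.continuousAt_log hx.1.ne'))).pow 2))) hden
    have hgint : IntervalIntegrable g MeasureTheory.volume 0 1 := by
      apply hmint.mono_fun' hgmeas
      refine (MeasureTheory.ae_restrict_iff' measurableSet_uIoc).mpr ?_
      apply Filter.Eventually.of_forall
      intro x hx
      rw [Set.uIoc_of_le (zero_le_one' ℝ)] at hx
      simp only [Real.norm_eq_abs]
      rw [abs_of_nonneg (hgnonneg x hx)]
      exact hglem x hx
    have hmono : ∫ v in (0:ℝ)..1, g v ≤ ∫ v in (0:ℝ)..1, mf c lam L v := by
      apply intervalIntegral.integral_mono_ae_restrict zero_le_one hgint hmint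
      refine (MeasureTheory.ae_restrict_iff' measurableSet_Icc).mpr ?_
      have h0 : ∀ᵐ (x : ℝ), x ≠ 0 := by
        rw [MeasureTheory.ae_iff]
        simp only [ne_eq, not_not, Set.setOf_eq_eq_singleton]
        exact Real.volume_singleton
      filter_upwards [h0] with x hx hxI
      exact hglem x ⟨lt_of_le_of_ne hxI.1 (Ne.symm hx), hxI.2⟩
    -- final computation
    have hS1 : Sf c lam L 1 = Real.exp (-lam) * (c / 2)
        - c / (2 * L) * (Real.exp (-lam) * (3 + lam)) := by
      simp [Sf, Tf]
    have hS0 : Sf c lam L 0 = -(c / (2 * L) * 3) := by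
      simp [Sf, Tf]
    have hfinal : Sf c lam L 1 - Sf c lam L 0 ≤ 2 * c / L := by
      rw [hS1, hS0]
      have hLE : L ≤ Real.exp lam := by
        have h4 := Real.log_le_sub_one_of_pos hlampos
        have h5 := Real.add_one_le_exp lam
        simp only [hLdef]
        linarith
      have hinv : Real.exp (-lam) ≤ 1 / L := by
        rw [Real.exp_neg, one_div]
        exact inv_anti₀ hLpos hLE
      have hterm : 0 ≤ c / (2 * L) * (Real.exp (-lam) * (3 + lam)) := by
        apply mul_nonneg (div_nonneg hc.le (by linarith))
        exact mul_nonneg (Real.exp_nonneg _) (by linarith)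
      have h5 : Real.exp (-lam) * (c / 2) ≤ 1 / L * (c / 2) :=
        mul_le_mul_of_nonneg_right hinv (by linarith)
      have h6 : 1 / L * (c / 2) + c / (2 * L) * 3 = 2 * c / L := by
        field_simp
        ring
      linarith
    calc ∫ v in (0:ℝ)..1, Real.exp (-lam * v) * G v = ∫ v in (0:ℝ)..1, g v := hcongr
      _ ≤ ∫ v in (0:ℝ)..1, mf c lam L v := hmono
      _ = Sf c lam L 1 - Sf c lam L 0 := hftc
      _ ≤ 2 * c / L := hfinal
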